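/- Let K ⊂ [0,1]^2 be the attractor of the iterated function system {f_1, f_2, f_3} on ℝ^2, where f_1(z) = z/2 + (1/2, 0), f_2(z) = z/2 + (1/2, 1/2), and f_3(z) = (1/4)R(z) + (1/4, 3/4) with R the rotation by angle π/2, i.e. R(x,y) = (−y, x). Then the projection of K onto the y-axis is the interval {0} × [0,1], and the projection of K onto the x-axis is the set (⋃_{k=0}^∞ [1 − 2^{−k}, 1 − 2^{−k} + 2^{−k−2}] ∪ {1}) × {0}; in particular, this projection is a countably infinite union of pairwise disjoint closed intervals together with the point 1. -/

import Mathlib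

open Metric Set
open scoped RealInnerProductSpace ENNReal

/-- Orthogonal projection onto the affine hyperplane through `y` orthogonal to the
unit vector `θ` (for `y = 0` this is the projection onto the hyperplane `L_θ`). -/
noncomputable def projH {d : ℕ} (θ y z : EuclideanSpace ℝ (Fin d)) : EuclideanSpace ℝ (Fin d) :=
  z - ⟪z - y, θ⟫ • θ

/-- The affine hyperplane `L_{θ,y}` through `y` orthogonal to `θ`. -/
def affHyp {d : ℕ} (θ y : EuclideanSpace ℝ (Fin d)) : Set (EuclideanSpace ℝ (Fin d)) :=
  {x | ⟪x - y, θ⟫ = 0}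

/-- The visible part of `F` from the hyperplane `L_{θ,y}`:
points `z ∈ F` such that the segment from `z` to its projection meets `F` only in `z`. -/
noncomputable def visible {d : ℕ} (θ y : EuclideanSpace ℝ (Fin d))
    (F : Set (EuclideanSpace ℝ (Fin d))) : Set (EuclideanSpace ℝ (Fin d)) :=
  {z | z ∈ F ∧ segment ℝ z (projH θ y z) ∩ F = {z}}

/-- Interior of `A` relative to the hyperplane `L_θ` through the origin orthogonal to `θ`. -/
def relIntH {d : ℕ} (θ : EuclideanSpace ℝ (Fin d)) (A : Set (EuclideanSpace ℝ (Fin d))) :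
    Set (EuclideanSpace ℝ (Fin d)) :=
  {x | x ∈ A ∧ ∃ ε > 0, ∀ z : EuclideanSpace ℝ (Fin d), ⟪z, θ⟫ = 0 → dist z x < ε → z ∈ A}

/-- The penetrable part of `F` in direction `θ`:
`Pen_θ(F) = F ∩ P_θ⁻¹(P_θ(F) \ Int(P_θ(F)))`. -/
noncomputable def pen {d : ℕ} (θ : EuclideanSpace ℝ (Fin d))
    (F : Set (EuclideanSpace ℝ (Fin d))) : Set (EuclideanSpace ℝ (Fin d)) :=
  F ∩ projH θ 0 ⁻¹' (projH θ 0 '' F \ relIntH θ (projH θ 0 '' F))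

/-- The Assouad dimension of a set: the infimum of all `s ≥ 0` such that for some `C > 0`,
for all `0 < r < R` and `x ∈ F`, the set `F ∩ B(x,R)` can be covered by at most
`C (R/r)^s` balls of radius `r`. -/
noncomputable def dimA {d : ℕ} (F : Set (EuclideanSpace ℝ (Fin d))) : ℝ≥0∞ :=
  ⨅ (s : ℝ) (_ : 0 ≤ s) (_ : ∃ C : ℝ, 0 < C ∧ ∀ x ∈ F, ∀ r R : ℝ, 0 < r → r < R →
      ∃ t : Finset (EuclideanSpace ℝ (Fin d)),
        (t.card : ℝ) ≤ C * (R / r) ^ s ∧ F ∩ ball x R ⊆ ⋃ c ∈ t, ball c r),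
    ENNReal.ofReal s

/-- Least number of balls of radius `r` needed to cover `F`. -/
noncomputable def coverN {d : ℕ} (F : Set (EuclideanSpace ℝ (Fin d))) (r : ℝ) : ℕ :=
  sInf {n : ℕ | ∃ t : Finset (EuclideanSpace ℝ (Fin d)), t.card = n ∧ F ⊆ ⋃ c ∈ t, ball c r}

/-- The upper box-counting dimension of a set. -/
noncomputable def udimB {d : ℕ} (F : Set (EuclideanSpace ℝ (Fin d))) : ℝ≥0∞ :=
  Filter.limsup (fun r : ℝ => ENNReal.ofReal (Real.log (coverN F r) / Real.log (1 / r)))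
    (nhdsWithin 0 (Set.Ioi 0))

/-- The point of the plane `ℝ² = EuclideanSpace ℝ (Fin 2)` with coordinates `(a, b)`. -/
noncomputable def e2 (a b : ℝ) : EuclideanSpace ℝ (Fin 2) :=
  (EuclideanSpace.equiv (Fin 2) ℝ).symm ![a, b]

/-- For the attractor of the IFS `{f₁, f₂, f₃}` of Example 3 (two homotheties of ratio
`1/2` and one similarity of ratio `1/4` rotating by `π/2`), the projection onto the
`y`-axis is `{0} × [0,1]` and the projection onto the `x`-axis is the countable union
`⋃ₖ [1 - 2⁻ᵏ, 1 - 2⁻ᵏ + 2⁻ᵏ⁻²] ∪ {1}`, a countably infinite union of pairwise disjoint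
closed intervals together with the point `1`. -/

lemma auxY (Y : Set ℝ) (hcl : IsClosed Y) (hne : Y.Nonempty) (hsub : Y ⊆ Set.Icc 0 1)
    (h1 : ∀ y ∈ Y, y / 2 ∈ Y) (h2 : ∀ y ∈ Y, y / 2 + 1 / 2 ∈ Y) : Y = Set.Icc 0 1 := by
  refine subset_antisymm hsub fun t ht => ?_
  have key : ∀ n : ℕ, ∀ t : ℝ, t ∈ Set.Icc (0:ℝ) 1 → ∃ y ∈ Y, |y - t| ≤ (1/2)^n := by
    intro n
    induction n with
    | zero =>
      intro t ht
      obtain ⟨y0, hy0⟩ := hne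
      have h := hsub hy0
      rw [Set.mem_Icc] at h ht
      refine ⟨y0, hy0, ?_⟩
      rw [pow_zero, abs_le]
      constructor <;> linarith [h.1, h.2, ht.1, ht.2]
    | succ n ih =>
      intro t ht
      rw [Set.mem_Icc] at ht
      rcases le_or_gt t (1/2) with h | h
      · obtain ⟨y, hy, hyd⟩ := ih (2*t) (Set.mem_Icc.mpr ⟨by linarith, by linarith⟩)
        refine ⟨y/2, h1 y hy, ?_⟩
        have he : y/2 - t = (y - 2*t)/2 := by ring
        rw [he, abs_div, abs_two, pow_succ]
        linarith
      · obtain ⟨y, hy, hyd⟩ := ih (2*t - 1) (Set.mem_Icc.mpr ⟨by linarith, by linarith⟩)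
        refine ⟨y/2 + 1/2, h2 y hy, ?_⟩
        have he : y/2 + 1/2 - t = (y - (2*t - 1))/2 := by ring
        rw [he, abs_div, abs_two, pow_succ]
        linarith
  have hcls : t ∈ closure Y := by
    rw [Metric.mem_closure_iff]
    intro ε hε
    obtain ⟨n, hn⟩ := exists_pow_lt_of_lt_one hε (by norm_num : (1:ℝ)/2 < 1)
    obtain ⟨y, hy, hyd⟩ := key n t ht
    exact ⟨y, hy, by rw [Real.dist_eq, abs_sub_comm]; exact lt_of_le_of_lt hyd hn⟩
  rwa [hcl.closure_eq] at hcls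

lemma auxX (X : Set ℝ) (hcl : IsClosed X) (hne : X.Nonempty) (hsub : X ⊆ Set.Icc 0 1)
    (hg : ∀ x ∈ X, x / 2 + 1 / 2 ∈ X) (hbase : Set.Icc (0:ℝ) (1/4) ⊆ X)
    (hcases : ∀ x ∈ X, x ∈ Set.Icc (0:ℝ) (1/4) ∨ ∃ x' ∈ X, x = x' / 2 + 1 / 2) :
    X = {x : ℝ | x = 1 ∨ ∃ k : ℕ,
      x ∈ Set.Icc (1 - (1/2:ℝ)^k) (1 - (1/2)^k + (1/2)^k/4)} := by
  have h1X : (1:ℝ) ∈ X := by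
    have key : ∀ n : ℕ, ∃ x ∈ X, 1 - (1/2:ℝ)^n ≤ x ∧ x ≤ 1 := by
      intro n
      induction n with
      | zero =>
        obtain ⟨x0, hx0⟩ := hne
        have h := hsub hx0
        rw [Set.mem_Icc] at h
        exact ⟨x0, hx0, by rw [pow_zero]; linarith [h.1], h.2⟩
      | succ n ih =>
        obtain ⟨x, hx, hx1, hx2⟩ := ih
        exact ⟨x/2 + 1/2, hg x hx, by rw [pow_succ]; constructor <;> linarith⟩
    rw [← hcl.closure_eq, Metric.mem_closure_iff]
    intro ε hε
    obtain ⟨n, hn⟩ := exists_pow_lt_of_lt_one hε (by norm_num : (1:ℝ)/2 < 1)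
    obtain ⟨x, hx, hx1, hx2⟩ := key n
    exact ⟨x, hx, by rw [Real.dist_eq, abs_of_nonneg (by linarith)]; linarith⟩
  have step : ∀ n : ℕ, ∀ x ∈ X,
      (∃ k : ℕ, x ∈ Set.Icc (1 - (1/2:ℝ)^k) (1 - (1/2)^k + (1/2)^k/4)) ∨
        1 - (1/2:ℝ)^n ≤ x := by
    intro n
    induction n with
    | zero =>
      intro x hx
      right
      rw [pow_zero]
      linarith [(Set.mem_Icc.mp (hsub hx)).1]
    | succ n ih =>
      intro x hx
      rcases hcases x hx with h | ⟨x', hx', rfl⟩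
      · left
        rw [Set.mem_Icc] at h
        refine ⟨0, Set.mem_Icc.mpr ⟨?_, ?_⟩⟩ <;> rw [pow_zero] <;> linarith [h.1, h.2]
      · rcases ih x' hx' with ⟨k, hk⟩ | hge
        · left
          refine ⟨k+1, ?_⟩
          rw [Set.mem_Icc] at hk ⊢
          rw [pow_succ]
          constructor <;> linarith [hk.1, hk.2]
        · right
          rw [pow_succ]
          linarith
  have Isub : ∀ k : ℕ, Set.Icc (1 - (1/2:ℝ)^k) (1 - (1/2)^k + (1/2)^k/4) ⊆ X := by
    intro k
    induction k with
    | zero =>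
      intro t ht
      rw [Set.mem_Icc, pow_zero] at ht
      exact hbase (Set.mem_Icc.mpr ⟨by linarith [ht.1], by linarith [ht.2]⟩)
    | succ k ih =>
      intro t ht
      rw [Set.mem_Icc, pow_succ] at ht
      have h' : 2*t - 1 ∈ Set.Icc (1 - (1/2:ℝ)^k) (1 - (1/2)^k + (1/2)^k/4) :=
        Set.mem_Icc.mpr ⟨by linarith [ht.1], by linarith [ht.2]⟩
      have hh := hg _ (ih h')
      have he : (2*t - 1)/2 + 1/2 = t := by ring
      rwa [he] at hh
  ext x
  simp only [Set.mem_setOf_eq]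
  constructor
  · intro hx
    by_cases h1 : x = 1
    · exact Or.inl h1
    · right
      have hxlt : x < 1 := lt_of_le_of_ne (Set.mem_Icc.mp (hsub hx)).2 h1
      obtain ⟨n, hn⟩ := exists_pow_lt_of_lt_one (by linarith : (0:ℝ) < 1 - x)
        (by norm_num : (1:ℝ)/2 < 1)
      rcases step n x hx with h | h
      · exact h
      · exact absurd h (by linarith)
  · rintro (rfl | ⟨k, hk⟩)
    · exact h1X
    · exact Isub k hk

theorem stmt17 (f₁ f₂ f₃ : EuclideanSpace ℝ (Fin 2) → EuclideanSpace ℝ (Fin 2))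
    (hf₁ : ∀ z, f₁ z = (1/2 : ℝ) • z + e2 (1/2) 0)
    (hf₂ : ∀ z, f₂ z = (1/2 : ℝ) • z + e2 (1/2) (1/2))
    (hf₃ : ∀ z, f₃ z = (1/4 : ℝ) • e2 (-(z 1)) (z 0) + e2 (1/4) (3/4))
    (K : Set (EuclideanSpace ℝ (Fin 2)))
    (hKc : IsCompact K) (hKne : K.Nonempty)
    (hKsub : K ⊆ {z | z 0 ∈ Set.Icc (0:ℝ) 1 ∧ z 1 ∈ Set.Icc (0:ℝ) 1})
    (hattr : K = f₁ '' K ∪ f₂ '' K ∪ f₃ '' K) :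
    (fun z : EuclideanSpace ℝ (Fin 2) => e2 0 (z 1)) '' K =
        {z : EuclideanSpace ℝ (Fin 2) | z 0 = 0 ∧ z 1 ∈ Set.Icc (0:ℝ) 1} ∧
    (fun z : EuclideanSpace ℝ (Fin 2) => e2 (z 0) 0) '' K =
        {z : EuclideanSpace ℝ (Fin 2) | z 1 = 0 ∧ (z 0 = 1 ∨ ∃ k : ℕ,
          z 0 ∈ Set.Icc (1 - 2 ^ (-(k : ℤ))) (1 - 2 ^ (-(k : ℤ)) + 2 ^ (-(k : ℤ) - 2)))} ∧
    (∀ k l : ℕ, k ≠ l →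
      Disjoint (Set.Icc (1 - (2:ℝ) ^ (-(k : ℤ))) (1 - 2 ^ (-(k : ℤ)) + 2 ^ (-(k : ℤ) - 2)))
        (Set.Icc (1 - (2:ℝ) ^ (-(l : ℤ))) (1 - 2 ^ (-(l : ℤ)) + 2 ^ (-(l : ℤ) - 2)))) ∧
    ∀ k : ℕ, (1 : ℝ) ∉
      Set.Icc (1 - (2:ℝ) ^ (-(k : ℤ))) (1 - 2 ^ (-(k : ℤ)) + 2 ^ (-(k : ℤ) - 2)) := by
  have hK1 : ∀ z ∈ K, f₁ z ∈ K := fun z hz => by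
    rw [hattr]; exact Set.mem_union_left _ (Set.mem_union_left _ ⟨z, hz, rfl⟩)
  have hK2 : ∀ z ∈ K, f₂ z ∈ K := fun z hz => by
    rw [hattr]; exact Set.mem_union_left _ (Set.mem_union_right _ ⟨z, hz, rfl⟩)
  have hK3 : ∀ z ∈ K, f₃ z ∈ K := fun z hz => by
    rw [hattr]; exact Set.mem_union_right _ ⟨z, hz, rfl⟩
  have hf₁0 : ∀ z, f₁ z 0 = z 0 / 2 + 1/2 := fun z => by
    rw [hf₁]; show (1/2:ℝ) * z 0 + 1/2 = _; ring
  have hf₁1 : ∀ z, f₁ z 1 = z 1 / 2 := fun z => by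
    rw [hf₁]; show (1/2:ℝ) * z 1 + 0 = _; ring
  have hf₂0 : ∀ z, f₂ z 0 = z 0 / 2 + 1/2 := fun z => by
    rw [hf₂]; show (1/2:ℝ) * z 0 + 1/2 = _; ring
  have hf₂1 : ∀ z, f₂ z 1 = z 1 / 2 + 1/2 := fun z => by
    rw [hf₂]; show (1/2:ℝ) * z 1 + 1/2 = _; ring
  have hf₃0 : ∀ z, f₃ z 0 = (1 - z 1) / 4 := fun z => by
    rw [hf₃]; show (1/4:ℝ) * (-(z 1)) + 1/4 = _; ring
  set Y : Set ℝ := (fun z : EuclideanSpace ℝ (Fin 2) => z 1) '' K with hYdef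
  set X : Set ℝ := (fun z : EuclideanSpace ℝ (Fin 2) => z 0) '' K with hXdef
  have hYcl : IsClosed Y := (hKc.image (EuclideanSpace.proj (1 : Fin 2)).continuous).isClosed
  have hYne : Y.Nonempty := hKne.image _
  have hYsub : Y ⊆ Set.Icc 0 1 := by rintro y ⟨z, hz, rfl⟩; exact (hKsub hz).2
  have hYh1 : ∀ y ∈ Y, y / 2 ∈ Y := by rintro y ⟨z, hz, rfl⟩; exact ⟨f₁ z, hK1 z hz, hf₁1 z⟩
  have hYh2 : ∀ y ∈ Y, y / 2 + 1 / 2 ∈ Y := by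
    rintro y ⟨z, hz, rfl⟩; exact ⟨f₂ z, hK2 z hz, hf₂1 z⟩
  have hYfull : Y = Set.Icc 0 1 := auxY Y hYcl hYne hYsub hYh1 hYh2
  have hXcl : IsClosed X := (hKc.image (EuclideanSpace.proj (0 : Fin 2)).continuous).isClosed
  have hXne : X.Nonempty := hKne.image _
  have hXsub : X ⊆ Set.Icc 0 1 := by rintro x ⟨z, hz, rfl⟩; exact (hKsub hz).1
  have hXg : ∀ x ∈ X, x / 2 + 1 / 2 ∈ X := by
    rintro x ⟨z, hz, rfl⟩; exact ⟨f₁ z, hK1 z hz, hf₁0 z⟩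
  have hXbase : Set.Icc (0:ℝ) (1/4) ⊆ X := by
    intro t ht
    rw [Set.mem_Icc] at ht
    have hY : (1 - 4*t : ℝ) ∈ Y := by
      rw [hYfull]; exact Set.mem_Icc.mpr ⟨by linarith, by linarith⟩
    obtain ⟨z, hz, hz1⟩ := hY
    refine ⟨f₃ z, hK3 z hz, ?_⟩
    show f₃ z 0 = t
    simp only [] at hz1
    rw [hf₃0, hz1]; ring
  have hXcases : ∀ x ∈ X, x ∈ Set.Icc (0:ℝ) (1/4) ∨ ∃ x' ∈ X, x = x' / 2 + 1 / 2 := by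
    rintro x ⟨z, hz, rfl⟩
    rw [hattr] at hz
    rcases hz with (⟨w, hw, rfl⟩ | ⟨w, hw, rfl⟩) | ⟨w, hw, rfl⟩
    · exact Or.inr ⟨w 0, ⟨w, hw, rfl⟩, hf₁0 w⟩
    · exact Or.inr ⟨w 0, ⟨w, hw, rfl⟩, hf₂0 w⟩
    · left
      rw [Set.mem_Icc]
      beta_reduce
      rw [hf₃0]
      have hw2 := (hKsub hw).2
      rw [Set.mem_Icc] at hw2
      constructor <;> linarith [hw2.1, hw2.2]
  have hXchar := auxX X hXcl hXne hXsub hXg hXbase hXcases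
  have hzp1 : ∀ k : ℕ, (2:ℝ) ^ (-(k:ℤ)) = (1/2)^k := by
    intro k
    rw [zpow_neg, zpow_natCast, one_div, inv_pow]
  have hzp2 : ∀ k : ℕ, (2:ℝ) ^ (-(k:ℤ) - 2) = (1/2)^k / 4 := by
    intro k
    rw [zpow_sub₀ (two_ne_zero), hzp1]
    norm_num
  refine ⟨?_, ?_, ?_, ?_⟩
  · ext z
    simp only [Set.mem_image, Set.mem_setOf_eq]
    constructor
    · rintro ⟨w, hw, rfl⟩
      exact ⟨rfl, (hKsub hw).2⟩
    · rintro ⟨h0, h1'⟩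
      have hz1 : z 1 ∈ Y := by rw [hYfull]; exact h1'
      obtain ⟨w, hw, hw1⟩ := hz1
      refine ⟨w, hw, ?_⟩
      ext i
      fin_cases i
      · exact h0.symm
      · exact hw1
  · ext z
    simp only [Set.mem_image, Set.mem_setOf_eq]
    constructor
    · rintro ⟨w, hw, rfl⟩
      refine ⟨rfl, ?_⟩
      have hx : w 0 ∈ X := ⟨w, hw, rfl⟩
      rw [hXchar] at hx
      simp only [Set.mem_setOf_eq] at hx
      rcases hx with h | ⟨k, hk⟩
      · exact Or.inl h
      · refine Or.inr ⟨k, ?_⟩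
        rw [hzp1 k, hzp2 k]
        exact hk
    · rintro ⟨h1', h0⟩
      have hx : z 0 ∈ X := by
        rw [hXchar]
        simp only [Set.mem_setOf_eq]
        rcases h0 with h | ⟨k, hk⟩
        · exact Or.inl h
        · refine Or.inr ⟨k, ?_⟩
          rw [hzp1 k, hzp2 k] at hk
          exact hk
      obtain ⟨w, hw, hw0⟩ := hx
      refine ⟨w, hw, ?_⟩
      ext i
      fin_cases i
      · exact hw0
      · exact h1'.symm
  · have main : ∀ k l : ℕ, k < l → Disjoint
        (Set.Icc (1 - (2:ℝ) ^ (-(k : ℤ))) (1 - 2 ^ (-(k : ℤ)) + 2 ^ (-(k : ℤ) - 2)))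
        (Set.Icc (1 - (2:ℝ) ^ (-(l : ℤ))) (1 - 2 ^ (-(l : ℤ)) + 2 ^ (-(l : ℤ) - 2))) := by
      intro k l hkl
      rw [Set.disjoint_left]
      intro x hx hx'
      rw [Set.mem_Icc, hzp1 k, hzp2 k] at hx
      rw [Set.mem_Icc, hzp1 l, hzp2 l] at hx'
      have hle : ((1:ℝ)/2)^l ≤ (1/2)^(k+1) :=
        pow_le_pow_of_le_one (by norm_num) (by norm_num) hkl
      rw [pow_succ] at hle
      have hp : (0:ℝ) < (1/2)^k := by positivity
      linarith [hx.2, hx'.1]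
    intro k l hkl
    rcases hkl.lt_or_gt with h | h
    · exact main k l h
    · exact (main l k h).symm
  · intro k h
    rw [Set.mem_Icc, hzp1 k, hzp2 k] at h
    have hp : (0:ℝ) < (1/2)^k := by positivity
    linarith [h.2]
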